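/- For polynomials p1, p2, p3, p4 (homogeneous of degree k−1) in four variables, the matrix equation C(x)·(p1,p2,p3,p4)^T = 0, where C(x) is the 6×4 matrix with rows (0,0,x4,−x3), (0,−x4,0,x2), (0,x3,−x2,0), (x4,0,0,−x1), (−x3,0,x1,0), (x2,−x1,0,0), holds if and only if there exists a polynomial q (homogeneous of degree k−2) with p_i = x_i q for i = 1,2,3,4. -/

import Mathlib

open MvPolynomial

lemma my_degree_single_add (i : Fin 4) (d : Fin 4 →₀ ℕ) :
    (Finsupp.single i 1 + d).degree = d.degree + 1 := by
  simp [Finsupp.degree_eq_weight_one, map_add, Finsupp.weight_apply, Finsupp.sum_single_index,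
    add_comm]

lemma my_prime_X (i : Fin 4) : Prime (X i : MvPolynomial (Fin 4) ℝ) := by
  have h0 : Prime (X 0 : MvPolynomial (Fin 4) ℝ) := by
    rw [← MulEquiv.prime_iff (finSuccEquiv ℝ 3)]
    simpa [finSuccEquiv_X_zero] using (Polynomial.prime_X (R := MvPolynomial (Fin 3) ℝ))
  have := (MulEquiv.prime_iff (renameEquiv ℝ (Equiv.swap (0 : Fin 4) i))
    (p := (X 0 : MvPolynomial (Fin 4) ℝ))).2 h0
  simpa using this

lemma my_homog_of_X_mul {i : Fin 4} {q : MvPolynomial (Fin 4) ℝ} {m : ℕ}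
    (h : ((X i : MvPolynomial (Fin 4) ℝ) * q).IsHomogeneous m) :
    q.IsHomogeneous (m - 1) := by
  rcases eq_or_ne q 0 with rfl | hq
  · exact isHomogeneous_zero _ _ _
  · obtain ⟨d₀, hd₀⟩ : ∃ d, coeff d q ≠ 0 := by
      by_contra hc
      push_neg at hc
      exact hq (MvPolynomial.ext _ _ fun d => by simpa using hc d)
    have hm : m ≥ 1 := by
      have := h.coeff_eq_zero (d := Finsupp.single i 1 + d₀)
      rw [coeff_X_mul] at this
      by_contra hm
      have hm0 : m = 0 := by omega
      exact hd₀ (this (by rw [my_degree_single_add]; omega))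
    intro d hd
    have hcm := h.coeff_eq_zero (d := Finsupp.single i 1 + d)
    rw [coeff_X_mul] at hcm
    by_contra hdeg
    have hne : (Finsupp.single i 1 + d).degree ≠ m := by
      rw [my_degree_single_add]
      simp only [Finsupp.degree_eq_weight_one] at hdeg ⊢
      change (Finsupp.weight 1) d + 1 ≠ m
      omega
    exact hd (hcm hne)

/-- For homogeneous polynomials `p₁,…,p₄` of degree `k−1` in four variables,
`C(x)·(p₁,p₂,p₃,p₄)ᵀ = 0` (with the explicit 6×4 matrix `C(x)` of linear
entries) holds iff there is a homogeneous polynomial `q` of degree `k−2` with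
`p_i = x_i q` for every `i`. -/
theorem kernel_characterization (k : ℕ) (p : Fin 4 → MvPolynomial (Fin 4) ℝ)
    (hp : ∀ i, p i ∈ homogeneousSubmodule (Fin 4) ℝ (k - 1)) :
    (X 3 * p 2 - X 2 * p 3 = 0 ∧
     -(X 3) * p 1 + X 1 * p 3 = 0 ∧
     X 2 * p 1 - X 1 * p 2 = 0 ∧
     X 3 * p 0 - X 0 * p 3 = 0 ∧
     -(X 2) * p 0 + X 0 * p 2 = 0 ∧
     X 1 * p 0 - X 0 * p 1 = 0) ↔
    (∃ q : MvPolynomial (Fin 4) ℝ,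
      q ∈ homogeneousSubmodule (Fin 4) ℝ (k - 2) ∧ ∀ i, p i = X i * q) := by
  constructor
  · rintro ⟨h1, h2, h3, h4, h5, h6⟩
    -- X 3 divides p 3
    have hdvd : (X 3 : MvPolynomial (Fin 4) ℝ) ∣ p 3 := by
      have h : (X 3 : MvPolynomial (Fin 4) ℝ) ∣ X 0 * p 3 :=
        ⟨p 0, by linear_combination -h4⟩
      rcases (my_prime_X 3).2.2 _ _ h with h' | h'
      · simp at h'
      · exact h'
    obtain ⟨q, hq⟩ := hdvd
    have hX3 : (X 3 : MvPolynomial (Fin 4) ℝ) ≠ 0 := X_ne_zero 3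
    have e0 : p 0 = X 0 * q := by
      have : X 3 * p 0 = X 3 * (X 0 * q) := by rw [← sub_eq_zero]; linear_combination h4 + X 0 * hq
      exact mul_left_cancel₀ hX3 this
    have e1 : p 1 = X 1 * q := by
      have : X 3 * p 1 = X 3 * (X 1 * q) := by rw [← sub_eq_zero]; linear_combination -h2 + X 1 * hq
      exact mul_left_cancel₀ hX3 this
    have e2 : p 2 = X 2 * q := by
      have : X 3 * p 2 = X 3 * (X 2 * q) := by rw [← sub_eq_zero]; linear_combination h1 + X 2 * hq
      exact mul_left_cancel₀ hX3 this
    refine ⟨q, ?_, ?_⟩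
    · rw [mem_homogeneousSubmodule]
      have : q.IsHomogeneous (k - 1 - 1) :=
        my_homog_of_X_mul (i := 3) (by rw [← hq]; exact (mem_homogeneousSubmodule _ _).1 (hp 3))
      simpa [Nat.sub_sub] using this
    · intro i
      fin_cases i
      · exact e0
      · exact e1
      · exact e2
      · exact hq
  · rintro ⟨q, _, hq⟩
    have h0 := hq 0; have h1 := hq 1; have h2 := hq 2; have h3 := hq 3
    refine ⟨?_, ?_, ?_, ?_, ?_, ?_⟩ <;> simp only [h0, h1, h2, h3] <;> ring
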